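/- (Atkinson) Let (X, ℬ, μ) be a probability space, T : X → X an ergodic measure-preserving automorphism, and φ : X → ℝ integrable with ∫ φ dμ = 0. Then for every B ∈ ℬ and every ε > 0, μ(⋃_{n ∈ ℕ} (B ∩ T^{−n}(B) ∩ {x : |∑_{i=0}^{n−1} φ(Tⁱ(x))| < ε})) = μ(B). -/

import Mathlib

open Filter Topology MeasureTheory

noncomputable section

/-- The plane ℝ². -/
abbrev V2 : Type := ℝ × ℝ

/-- Euclidean dot product on ℝ². -/
def dot (x y : V2) : ℝ := x.1 * y.1 + x.2 * y.2

/-- Euclidean norm on ℝ². -/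
def nrm (x : V2) : ℝ := Real.sqrt (dot x x)

/-- v^⊥ = (−v₂, v₁). -/
def perp (v : V2) : V2 := (-v.2, v.1)

/-- Inclusion of ℤ² into ℝ². -/
def intVec (u : ℤ × ℤ) : V2 := ((u.1 : ℝ), (u.2 : ℝ))

/-- `f` is a lift of a torus map: it commutes with all integer translations. -/
def IsLift (f : V2 → V2) : Prop := ∀ (z : V2) (u : ℤ × ℤ), f (z + intVec u) = f z + intVec u

/-- The Misiurewicz–Ziemian rotation set of `f`. -/
def RotSet (f : V2 → V2) : Set V2 :=
  {v | ∃ (n : ℕ → ℕ) (x : ℕ → V2), Tendsto n atTop atTop ∧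
    Tendsto (fun i => ((n i : ℝ))⁻¹ • (f^[n i] (x i) - x i)) atTop (𝓝 v)}

set_option linter.unusedSectionVars false

section AuxAtkinson

section Hopf

variable {X : Type*} [MeasurableSpace X]

/-- Maximal function for Hopf's lemma. -/
private def hopfM (f : X → X) (ψ : X → ℝ) : ℕ → X → ℝ
  | 0 => fun _ => 0
  | (N+1) => fun x => max 0 (ψ x + hopfM f ψ N (f x))

private lemma hopfM_nonneg (f : X → X) (ψ : X → ℝ) (N : ℕ) (x : X) : 0 ≤ hopfM f ψ N x := by
  cases N with
  | zero => exact le_refl 0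
  | succ N => exact le_max_left _ _

private lemma hopfM_mono (f : X → X) (ψ : X → ℝ) (N : ℕ) (x : X) :
    hopfM f ψ N x ≤ hopfM f ψ (N+1) x := by
  induction N generalizing x with
  | zero => exact hopfM_nonneg f ψ 1 x
  | succ N ih =>
    exact max_le_max le_rfl (by linarith [ih (f x)])

private lemma hopfM_eq_birkhoff (f : X → X) (ψ : X → ℝ) (N : ℕ) (x : X) :
    ∃ n ≤ N, hopfM f ψ N x = birkhoffSum f ψ n x := by
  induction N generalizing x with
  | zero => exact ⟨0, le_rfl, by simp [hopfM, birkhoffSum]⟩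
  | succ N ih =>
    rcases le_or_gt (hopfM f ψ (N+1) x) 0 with h | h
    · refine ⟨0, Nat.zero_le _, ?_⟩
      simp only [birkhoffSum_zero']
      exact le_antisymm h (hopfM_nonneg f ψ _ x)
    · obtain ⟨n, hn, he⟩ := ih (f x)
      refine ⟨n+1, by omega, ?_⟩
      have : hopfM f ψ (N+1) x = ψ x + hopfM f ψ N (f x) := by
        have : hopfM f ψ (N+1) x = max 0 (ψ x + hopfM f ψ N (f x)) := rfl
        rcases max_cases 0 (ψ x + hopfM f ψ N (f x)) with ⟨h1, _⟩ | ⟨h1, _⟩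
        · rw [this, h1] at h; exact absurd h (lt_irrefl 0)
        · rw [this, h1]
      rw [this, he, birkhoffSum_succ']

private lemma birkhoff_le_hopfM (f : X → X) (ψ : X → ℝ) (N n : ℕ) (hn : n ≤ N) (x : X) :
    birkhoffSum f ψ n x ≤ hopfM f ψ N x := by
  induction N generalizing x n with
  | zero =>
    interval_cases n
    simp [birkhoffSum, hopfM]
  | succ N ih =>
    cases n with
    | zero => simpa [birkhoffSum] using hopfM_nonneg f ψ (N+1) x
    | succ m =>
      rw [birkhoffSum_succ']
      calc ψ x + birkhoffSum f ψ m (f x) ≤ ψ x + hopfM f ψ N (f x) := by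
            linarith [ih m (by omega) (f x)]
        _ ≤ hopfM f ψ (N+1) x := le_max_right _ _

private lemma hopfM_measurable {f : X → X} (hf : Measurable f) {ψ : X → ℝ}
    (hψ : Measurable ψ) (N : ℕ) : Measurable (hopfM f ψ N) := by
  induction N with
  | zero => exact measurable_const
  | succ N ih => exact measurable_const.max (hψ.add (ih.comp hf))

private lemma hopfM_integrable {μ : Measure X} [IsFiniteMeasure μ] {f : X → X} (hf : MeasurePreserving f μ μ)
    {ψ : X → ℝ} (hψm : Measurable ψ) (hψ : Integrable ψ μ) (N : ℕ) :
    Integrable (hopfM f ψ N) μ := by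
  induction N with
  | zero => exact integrable_const 0
  | succ N ih =>
    have h1 : Integrable (fun x => ψ x + hopfM f ψ N (f x)) μ :=
      hψ.add ((hf.integrable_comp ih.aestronglyMeasurable).2 ih)
    have := h1.pos_part
    simpa [max_comm, hopfM] using this

/-- Hopf's maximal ergodic lemma. -/
private lemma hopf_maximal {μ : Measure X} [IsFiniteMeasure μ] {f : X → X}
    (hf : MeasurePreserving f μ μ) (hfe : MeasurableEmbedding f)
    {ψ : X → ℝ} (hψm : Measurable ψ) (hψ : Integrable ψ μ) :
    0 ≤ ∫ x in {x | ∃ n, 1 ≤ n ∧ 0 < birkhoffSum f ψ n x}, ψ x ∂μ := by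
  set E : ℕ → Set X := fun N => {x | 0 < hopfM f ψ N x} with hE
  have hEm : ∀ N, MeasurableSet (E N) := fun N =>
    measurableSet_lt measurable_const (hopfM_measurable hf.measurable hψm N)
  have hEmono : Monotone E := by
    intro a b hab x hx
    simp only [hE, Set.mem_setOf_eq] at hx ⊢
    calc (0:ℝ) < hopfM f ψ a x := hx
      _ ≤ hopfM f ψ b x := by
          clear hx
          induction hab with
          | refl => exact le_rfl
          | step _ ih => exact le_trans ih (hopfM_mono f ψ _ x)
  have hEunion : (⋃ N, E N) = {x | ∃ n, 1 ≤ n ∧ 0 < birkhoffSum f ψ n x} := by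
    ext x
    simp only [Set.mem_iUnion, hE, Set.mem_setOf_eq]
    constructor
    · rintro ⟨N, hN⟩
      obtain ⟨n, hn, he⟩ := hopfM_eq_birkhoff f ψ N x
      refine ⟨n, ?_, he ▸ hN⟩
      rcases Nat.eq_zero_or_pos n with rfl | h
      · rw [he] at hN; simp [birkhoffSum] at hN
      · exact h
    · rintro ⟨n, hn1, hn⟩
      exact ⟨n, lt_of_lt_of_le hn (birkhoff_le_hopfM f ψ n n le_rfl x)⟩
  -- each finite stage has nonneg integral
  have key : ∀ N, 0 ≤ ∫ x in E N, ψ x ∂μ := by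
    intro N
    cases N with
    | zero => simp [hE, hopfM]
    | succ N =>
      have hMint : ∀ K, Integrable (hopfM f ψ K) μ := hopfM_integrable hf hψm hψ
      have hMTint : Integrable (fun x => hopfM f ψ N (f x)) μ :=
        (hf.integrable_comp (hMint N).aestronglyMeasurable).2 (hMint N)
      have step1 : ∫ x in E (N+1), (hopfM f ψ (N+1) x - hopfM f ψ N (f x)) ∂μ
          ≤ ∫ x in E (N+1), ψ x ∂μ := by
        refine setIntegral_mono_on (((hMint (N+1)).sub hMTint).integrableOn)
          hψ.integrableOn (hEm (N+1)) ?_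
        intro x hx
        have hx' : 0 < hopfM f ψ (N+1) x := hx
        have : hopfM f ψ (N+1) x = ψ x + hopfM f ψ N (f x) := by
          rcases max_cases 0 (ψ x + hopfM f ψ N (f x)) with ⟨h1, _⟩ | ⟨h1, _⟩
          · exfalso; have : hopfM f ψ (N+1) x = 0 := h1; linarith
          · exact h1
        linarith
      have step2 : ∫ x in E (N+1), (hopfM f ψ (N+1) x - hopfM f ψ N (f x)) ∂μ
          = ∫ x in E (N+1), hopfM f ψ (N+1) x ∂μ - ∫ x in E (N+1), hopfM f ψ N (f x) ∂μ :=
        integral_sub ((hMint (N+1)).integrableOn) (hMTint.integrableOn)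
      have step3 : ∫ x in E (N+1), hopfM f ψ (N+1) x ∂μ = ∫ x, hopfM f ψ (N+1) x ∂μ := by
        have := integral_add_compl (hEm (N+1)) (hMint (N+1))
        have hz : ∫ x in (E (N+1))ᶜ, hopfM f ψ (N+1) x ∂μ = 0 := by
          rw [setIntegral_congr_fun (hEm (N+1)).compl (g := fun _ => (0:ℝ)) ?_, integral_zero]
          intro x hx
          simp only [hE, Set.mem_compl_iff, Set.mem_setOf_eq, not_lt] at hx
          exact le_antisymm hx (hopfM_nonneg f ψ _ x)
        linarith
      have step4 : ∫ x in E (N+1), hopfM f ψ N (f x) ∂μ ≤ ∫ x, hopfM f ψ N (f x) ∂μ :=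
        setIntegral_le_integral hMTint (Filter.Eventually.of_forall fun x => hopfM_nonneg f ψ N (f x))
      have step5 : ∫ x, hopfM f ψ N (f x) ∂μ = ∫ x, hopfM f ψ N x ∂μ :=
        hf.integral_comp hfe _
      have step6 : ∫ x, hopfM f ψ N x ∂μ ≤ ∫ x, hopfM f ψ (N+1) x ∂μ :=
        integral_mono (hMint N) (hMint (N+1)) (fun x => hopfM_mono f ψ N x)
      linarith
  have htend := tendsto_setIntegral_of_monotone hEm hEmono
    (hψ.integrableOn : IntegrableOn ψ (⋃ N, E N) μ)
  rw [hEunion] at htend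
  exact ge_of_tendsto' htend key

end Hopf


section ErgPart
variable {X : Type*} [MeasurableSpace X]

private lemma birkhoff_measurable {T : X → X} (hT : Measurable T) {ψ : X → ℝ}
    (hψ : Measurable ψ) (n : ℕ) : Measurable (fun x => birkhoffSum T ψ n x) :=
  Finset.measurable_sum _ (fun i _ => hψ.comp (hT.iterate i))

private lemma birkhoff_sub_const (T : X → X) (φ : X → ℝ) (c : ℝ) (n : ℕ) (x : X) :
    birkhoffSum T (fun y => φ y - c) n x = birkhoffSum T φ n x - n * c := by
  simp [birkhoffSum, Finset.sum_sub_distrib, mul_comm]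

/-- Main ergodic-theoretic estimate: upper bound for Birkhoff sums. -/
private lemma eventually_birkhoff_le (μ : Measure X) [IsProbabilityMeasure μ]
    (T : X ≃ X) (hTs : Measurable ⇑T.symm) (hErg : Ergodic ⇑T μ)
    {φ : X → ℝ} (hφm : Measurable φ) (hφ : Integrable φ μ)
    {c : ℝ} (hc : ∫ x, φ x ∂μ < c) :
    ∀ᵐ x ∂μ, ∀ᶠ n in atTop, birkhoffSum ⇑T φ n x ≤ c * n := by
  have hTm : Measurable ⇑T := hErg.toMeasurePreserving.measurable
  set c' : ℝ := (∫ x, φ x ∂μ + c) / 2 with hc'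
  have hc'1 : ∫ x, φ x ∂μ < c' := by rw [hc']; linarith
  have hc'2 : c' < c := by rw [hc']; linarith
  set ψ : X → ℝ := fun y => φ y - c' with hψ
  have hψm : Measurable ψ := hφm.sub measurable_const
  have hψi : Integrable ψ μ := hφ.sub (integrable_const c')
  have hψint : ∫ x, ψ x ∂μ < 0 := by
    rw [hψ]
    rw [integral_sub hφ (integrable_const c'), integral_const]
    simp only [probReal_univ, one_smul]
    linarith
  set S : ℕ → X → ℝ := fun n x => birkhoffSum ⇑T ψ n x with hS
  set A : Set X := {x | ∃ a : ℚ, 0 < a ∧ ∀ N : ℕ, ∃ n : ℕ, N ≤ n ∧ (a:ℝ) * n < S n x} with hA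
  have hAmeas : MeasurableSet A := by
    have : A = ⋃ (a : ℚ), ⋃ (_ : 0 < a), ⋂ (N : ℕ), ⋃ (n : ℕ), ⋃ (_ : N ≤ n),
        {x | (a:ℝ) * n < S n x} := by
      ext x
      simp only [hA, Set.mem_setOf_eq, Set.mem_iUnion, Set.mem_iInter, exists_prop]
    rw [this]
    refine MeasurableSet.iUnion fun a => MeasurableSet.iUnion fun _ =>
      MeasurableSet.iInter fun N => MeasurableSet.iUnion fun n => MeasurableSet.iUnion fun _ => ?_
    exact measurableSet_lt measurable_const (birkhoff_measurable hTm hψm n)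
  have hSrec : ∀ n x, S (n+1) x = ψ x + S n (T x) := fun n x => birkhoffSum_succ' ⇑T ψ n x
  have hAinv : ⇑T ⁻¹' A = A := by
    ext x
    simp only [Set.mem_preimage, hA, Set.mem_setOf_eq]
    constructor
    · rintro ⟨a, ha, hall⟩
      refine ⟨a/2, by positivity, fun N => ?_⟩
      obtain ⟨n, hn, hlt⟩ := hall (max N ⌈((a:ℝ)/2 - ψ x)/((a:ℝ)/2)⌉₊)
      have ha2 : (0:ℝ) < (a:ℝ)/2 := by positivity
      have hna : (((a:ℝ)/2 - ψ x)/((a:ℝ)/2)) ≤ (n:ℝ) := by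
        have := le_trans (le_max_right _ _) hn
        exact le_trans (Nat.le_ceil _) (by exact_mod_cast this)
      have h2 : (a:ℝ)/2 - ψ x ≤ ((a:ℝ)/2) * n := by
        rw [div_le_iff₀ ha2] at hna; linarith [hna]
      refine ⟨n+1, le_trans (le_trans (le_max_left _ _) hn) (Nat.le_succ n), ?_⟩
      have hrec : S (n+1) x = ψ x + S n (T x) := hSrec n x
      have hcast : ((a/2 : ℚ):ℝ) = (a:ℝ)/2 := by push_cast; ring
      have hcast2 : ((n+1 : ℕ):ℝ) = (n:ℝ)+1 := by push_cast; ring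
      rw [hcast, hcast2]
      calc (a:ℝ)/2 * ((n:ℝ)+1) = ((a:ℝ)/2) * n + (a:ℝ)/2 := by ring
        _ ≤ (a:ℝ) * n + ψ x := by nlinarith [h2]
        _ < S n (T x) + ψ x := by linarith [hlt]
        _ = S (n+1) x := by rw [hrec]; ring
    · rintro ⟨a, ha, hall⟩
      refine ⟨a/2, by positivity, fun N => ?_⟩
      obtain ⟨n, hn, hlt⟩ := hall (max (N+1) ⌈(ψ x + (a:ℝ)/2)/((a:ℝ)/2)⌉₊)
      have ha2 : (0:ℝ) < (a:ℝ)/2 := by positivity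
      have hna : ((ψ x + (a:ℝ)/2)/((a:ℝ)/2)) ≤ (n:ℝ) := by
        have := le_trans (le_max_right _ _) hn
        exact le_trans (Nat.le_ceil _) (by exact_mod_cast this)
      have h2 : ψ x + (a:ℝ)/2 ≤ ((a:ℝ)/2) * n := by
        rw [div_le_iff₀ ha2] at hna; linarith [hna]
      have hn1 : 1 ≤ n := le_trans (le_trans (by omega) (le_max_left _ _)) hn
      obtain ⟨m, rfl⟩ : ∃ m, n = m + 1 := ⟨n - 1, by omega⟩
      refine ⟨m, by have := le_trans (le_max_left _ _) hn; omega, ?_⟩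
      have hrec := hSrec m x
      have hcast : ((a/2 : ℚ):ℝ) = (a:ℝ)/2 := by push_cast; ring
      rw [hcast]
      have h2' : ψ x + (a:ℝ)/2 ≤ ((a:ℝ)/2) * ((m:ℝ)+1) := by
        have : ((m+1 : ℕ):ℝ) = (m:ℝ)+1 := by push_cast; ring
        rw [← this]; exact h2
      have hlt' : (a:ℝ) * ((m:ℝ)+1) < S (m+1) x := by
        have : ((m+1 : ℕ):ℝ) = (m:ℝ)+1 := by push_cast; ring
        rw [← this]; exact hlt
      calc (a:ℝ)/2 * (m:ℝ) = (a:ℝ) * ((m:ℝ)+1) - ((a:ℝ)/2 * ((m:ℝ)+1) + (a:ℝ)/2) := by ring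
        _ ≤ (a:ℝ) * ((m:ℝ)+1) - ψ x := by linarith [h2']
        _ < S (m+1) x - ψ x := by linarith [hlt']
        _ = S m (T x) := by rw [hrec]; ring
  rcases hErg.toPreErgodic.ae_empty_or_univ hAmeas hAinv with hemp | huniv
  · -- A is null: good
    have hA0 : μ A = 0 := by rwa [← ae_eq_empty]
    have hae : ∀ᵐ x ∂μ, x ∉ A := measure_eq_zero_iff_ae_notMem.1 hA0
    filter_upwards [hae] with x hx
    obtain ⟨q, hq0, hq⟩ := exists_rat_btwn (show (0:ℝ) < c - c' by linarith)
    have hq0' : 0 < q := by exact_mod_cast hq0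
    have h1 : ¬ (∀ N : ℕ, ∃ n : ℕ, N ≤ n ∧ (q:ℝ) * n < S n x) := fun h => hx ⟨q, hq0', h⟩
    push_neg at h1
    obtain ⟨N, hN⟩ := h1
    rw [eventually_atTop]
    refine ⟨N, fun n hn => ?_⟩
    have h2 := hN n hn
    have hSn : S n x = birkhoffSum ⇑T φ n x - n * c' := birkhoff_sub_const ⇑T φ c' n x
    have h3 : (q:ℝ) * n ≤ (c - c') * n :=
      mul_le_mul_of_nonneg_right (le_of_lt hq) (Nat.cast_nonneg n)
    nlinarith [h2, h3]
  · -- A has full measure: contradiction with Hopf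
    exfalso
    have hhopf := hopf_maximal (μ := μ) hErg.toMeasurePreserving
      (MeasurableEquiv.measurableEmbedding ⟨T, hTm, hTs⟩) hψm hψi
    set E := {x | ∃ n, 1 ≤ n ∧ 0 < birkhoffSum ⇑T ψ n x} with hE
    have hEm : MeasurableSet E := by
      have : E = ⋃ (n : ℕ), ⋃ (_ : 1 ≤ n), {x | 0 < birkhoffSum ⇑T ψ n x} := by
        ext x; simp only [hE, Set.mem_setOf_eq, Set.mem_iUnion, exists_prop]
      rw [this]
      exact MeasurableSet.iUnion fun n => MeasurableSet.iUnion fun _ =>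
        measurableSet_lt measurable_const (birkhoff_measurable hTm hψm n)
    have hAE : A ⊆ E := by
      rintro x ⟨a, ha, hall⟩
      obtain ⟨n, hn, hlt⟩ := hall 1
      refine ⟨n, hn, lt_trans ?_ hlt⟩
      have : (0:ℝ) < (a:ℝ) := by exact_mod_cast ha
      have : (1:ℝ) ≤ (n:ℝ) := by exact_mod_cast hn
      positivity
    have hEfull : μ Eᶜ = 0 := by
      have h1 : μ Aᶜ = 0 := by
        have := huniv
        rw [ae_eq_univ] at this
        exact this
      exact measure_mono_null (Set.compl_subset_compl.2 hAE) h1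
    have : ∫ x in E, ψ x ∂μ = ∫ x, ψ x ∂μ := by
      have := integral_add_compl hEm hψi
      have h0 : ∫ x in Eᶜ, ψ x ∂μ = 0 := by
        rw [Measure.restrict_eq_zero.2 hEfull, integral_zero_measure]
      linarith
    rw [this] at hhopf
    linarith

end ErgPart

section PartBC
variable {X : Type*} [MeasurableSpace X]

private lemma birkhoff_neg (T : X → X) (φ : X → ℝ) (n : ℕ) (x : X) :
    birkhoffSum T (fun y => -φ y) n x = - birkhoffSum T φ n x := by
  simp [birkhoffSum, Finset.sum_neg_distrib]

/-- A.e., Birkhoff sums of a mean-zero integrable function are sublinear. -/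
private lemma ae_birkhoff_sublinear (μ : Measure X) [IsProbabilityMeasure μ]
    (T : X ≃ X) (hTs : Measurable ⇑T.symm) (hErg : Ergodic ⇑T μ)
    {φ : X → ℝ} (hφm : Measurable φ) (hφ : Integrable φ μ)
    (hmean : ∫ x, φ x ∂μ = 0) :
    ∀ᵐ x ∂μ, ∀ δ : ℝ, 0 < δ → ∀ᶠ n in atTop, |birkhoffSum ⇑T φ n x| ≤ δ * n := by
  have hneg : ∫ x, -φ x ∂μ = 0 := by rw [integral_neg, hmean, neg_zero]
  have key : ∀ q : ℚ, ∀ᵐ x ∂μ, 0 < q →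
      ((∀ᶠ n in atTop, birkhoffSum ⇑T φ n x ≤ (q:ℝ) * n) ∧
       (∀ᶠ n in atTop, birkhoffSum ⇑T (fun y => -φ y) n x ≤ (q:ℝ) * n)) := by
    intro q
    by_cases hq : 0 < q
    · have hq' : (0:ℝ) < (q:ℝ) := by exact_mod_cast hq
      have h1 := eventually_birkhoff_le μ T hTs hErg hφm hφ (c := (q:ℝ))
        (by rw [hmean]; exact hq')
      have h2 := eventually_birkhoff_le μ T hTs hErg hφm.neg hφ.neg (c := (q:ℝ))
        (by rw [show ∫ x, (-φ) x ∂μ = 0 from hneg]; exact hq')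
      filter_upwards [h1, h2] with x hx1 hx2 _
      exact ⟨hx1, hx2⟩
    · exact Filter.Eventually.of_forall (fun x h => absurd h hq)
  rw [← ae_all_iff] at key
  filter_upwards [key] with x hx
  intro δ hδ
  obtain ⟨q, hq0, hqδ⟩ := exists_rat_btwn hδ
  have hq0' : 0 < q := by exact_mod_cast hq0
  obtain ⟨h1, h2⟩ := hx q hq0'
  filter_upwards [h1, h2] with n hn1 hn2
  have hqn : (q:ℝ) * n ≤ δ * n :=
    mul_le_mul_of_nonneg_right (le_of_lt hqδ) (Nat.cast_nonneg n)
  rw [birkhoff_neg] at hn2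
  rw [abs_le]
  constructor <;> linarith

/-- Counting lemma: `ε`-separated values with absolute value at most `Mb`. -/
private lemma card_sep {ε : ℝ} (hε : 0 < ε) (u : ℕ → ℝ) (N : ℕ) (F : Finset ℕ)
    (hFr : F ⊆ Finset.range N)
    (hsep : ∀ k ∈ F, ∀ m ∈ F, k ≠ m → ε ≤ |u k - u m|)
    {Mb : ℝ} (hMb : 0 ≤ Mb) (hM : ∀ n < N, |u n| ≤ Mb) :
    (F.card : ℝ) ≤ 2 * Mb / ε + 2 := by
  classical
  set b : ℕ → ℤ := fun n => ⌊u n / ε⌋ with hb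
  have hinj : Set.InjOn b ↑F := by
    intro k hk m hm hkm
    by_contra hne
    have hs := hsep k (by exact_mod_cast hk) m (by exact_mod_cast hm) hne
    have h1 : u k / ε < b k + 1 := Int.lt_floor_add_one _
    have h3 : u m / ε < b m + 1 := Int.lt_floor_add_one _
    have h2 : (b m : ℝ) ≤ u m / ε := Int.floor_le _
    have h4 : (b k : ℝ) ≤ u k / ε := Int.floor_le _
    have hbm : (b k : ℝ) = (b m : ℝ) := by exact_mod_cast hkm
    have e1 : (u k - u m)/ε < 1 := by rw [sub_div]; linarith
    have e2 : (u m - u k)/ε < 1 := by rw [sub_div]; linarith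
    have f1 : u k - u m < ε := by
      have := (div_lt_one hε).mp e1; linarith
    have f2 : u m - u k < ε := by
      have := (div_lt_one hε).mp e2; linarith
    have : |u k - u m| < ε := abs_lt.mpr ⟨by linarith, f1⟩
    linarith
  have himg : F.image b ⊆ Finset.Icc ⌊-Mb/ε⌋ ⌊Mb/ε⌋ := by
    intro z hz
    obtain ⟨n, hn, rfl⟩ := Finset.mem_image.mp hz
    have hnN : n < N := Finset.mem_range.mp (hFr hn)
    have habs := hM n hnN
    rw [abs_le] at habs
    have hd1 : -Mb/ε ≤ u n / ε := by gcongr; exact habs.1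
    have hd2 : u n / ε ≤ Mb/ε := by gcongr; exact habs.2
    exact Finset.mem_Icc.mpr ⟨Int.floor_mono hd1, Int.floor_mono hd2⟩
  have h5 : F.card = (F.image b).card := (Finset.card_image_of_injOn hinj).symm
  have h6 : (F.image b).card ≤ (Finset.Icc ⌊-Mb/ε⌋ ⌊Mb/ε⌋).card := Finset.card_le_card himg
  have h7 : (Finset.Icc ⌊-Mb/ε⌋ ⌊Mb/ε⌋).card = (⌊Mb/ε⌋ + 1 - ⌊-Mb/ε⌋).toNat :=
    Int.card_Icc _ _
  have h8 : ((⌊Mb/ε⌋ + 1 - ⌊-Mb/ε⌋).toNat : ℝ) ≤ 2 * Mb / ε + 2 := by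
    have hz1 : ((⌊Mb/ε⌋ : ℤ) : ℝ) ≤ Mb/ε := Int.floor_le _
    have hz2 : -Mb/ε - 1 < ((⌊-Mb/ε⌋ : ℤ) : ℝ) := by
      have := Int.sub_one_lt_floor (-Mb/ε)
      linarith
    have hrhs : (0:ℝ) ≤ 2 * Mb / ε + 2 := by positivity
    rcases le_or_gt (⌊Mb/ε⌋ + 1 - ⌊-Mb/ε⌋) 0 with h | h
    · rw [Int.toNat_of_nonpos h]
      exact_mod_cast hrhs
    · have hcast : (((⌊Mb/ε⌋ + 1 - ⌊-Mb/ε⌋).toNat : ℕ) : ℝ)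
          = ((⌊Mb/ε⌋:ℝ) + 1 - (⌊-Mb/ε⌋:ℝ)) := by
        rw [← Int.cast_natCast, Int.toNat_of_nonneg (le_of_lt h)]
        push_cast; ring
      rw [hcast]
      have hneg : (-Mb)/ε = -(Mb/ε) := by ring
      have h2Mb : 2*Mb/ε = Mb/ε + Mb/ε := by ring
      linarith
  calc (F.card : ℝ) = ((F.image b).card : ℝ) := by exact_mod_cast h5
    _ ≤ ((Finset.Icc ⌊-Mb/ε⌋ ⌊Mb/ε⌋).card : ℝ) := by exact_mod_cast h6
    _ = ((⌊Mb/ε⌋ + 1 - ⌊-Mb/ε⌋).toNat : ℝ) := by exact_mod_cast h7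
    _ ≤ 2 * Mb / ε + 2 := h8

end PartBC

section Main
variable {X : Type*} [MeasurableSpace X]

open scoped ENNReal

private lemma atkinson_aux (μ : Measure X) [IsProbabilityMeasure μ]
    (T : X ≃ X) (hTs : Measurable ⇑T.symm) (hErg : Ergodic ⇑T μ)
    {φ : X → ℝ} (hφm : Measurable φ) (hφ : Integrable φ μ)
    (hmean : ∫ x, φ x ∂μ = 0)
    (B : Set X) (hB : MeasurableSet B) {ε : ℝ} (hε : 0 < ε) :
    μ (B \ ⋃ n : ℕ, ⋃ _ : 1 ≤ n,
        (B ∩ (⇑T)^[n] ⁻¹' B ∩ {x | |birkhoffSum ⇑T φ n x| < ε})) = 0 := by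
  classical
  have hTm : Measurable ⇑T := hErg.toMeasurePreserving.measurable
  have hmp : MeasurePreserving ⇑T μ μ := hErg.toMeasurePreserving
  set S : ℕ → X → ℝ := fun n x => birkhoffSum ⇑T φ n x with hSdef
  set U : Set X := ⋃ n : ℕ, ⋃ _ : 1 ≤ n,
      (B ∩ (⇑T)^[n] ⁻¹' B ∩ {x | |birkhoffSum ⇑T φ n x| < ε}) with hU
  have hUm : MeasurableSet U := by
    refine MeasurableSet.iUnion fun n => MeasurableSet.iUnion fun _ => ?_
    exact (hB.inter ((hTm.iterate n) hB)).inter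
      (measurableSet_lt ((birkhoff_measurable hTm hφm n).abs) measurable_const)
  set E : Set X := B \ U with hE
  have hEm : MeasurableSet E := hB.diff hUm
  have hEB : E ⊆ B := Set.diff_subset
  have hEprop : ∀ x ∈ E, ∀ n, 1 ≤ n → (⇑T)^[n] x ∈ B → ε ≤ |S n x| := by
    intro x hx n hn hTn
    by_contra h
    push_neg at h
    exact hx.2 (Set.mem_iUnion.mpr ⟨n, Set.mem_iUnion.mpr ⟨hn, ⟨⟨hx.1, hTn⟩, h⟩⟩⟩)
  have hsep' : ∀ x : X, ∀ k m : ℕ, k < m → (⇑T)^[k] x ∈ E → (⇑T)^[m] x ∈ E →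
      ε ≤ |S m x - S k x| := by
    intro x k m hkm hk hm
    have h1 : k + (m - k) = m := Nat.add_sub_cancel' hkm.le
    have heq := birkhoffSum_add ⇑T φ k (m-k) x
    rw [h1] at heq
    have hTB : (⇑T)^[m-k] ((⇑T)^[k] x) ∈ B := by
      rw [← Function.iterate_add_apply]
      rw [Nat.sub_add_cancel hkm.le]
      exact hEB hm
    have hge := hEprop _ hk (m-k) (by omega) hTB
    have : S m x - S k x = birkhoffSum ⇑T φ (m-k) ((⇑T)^[k] x) := by
      rw [hSdef]; simp only []; rw [heq]; ring
    rw [this]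
    exact hge
  set K : ℕ → X → ℕ := fun N x => ((Finset.range N).filter (fun n => (⇑T)^[n] x ∈ E)).card
    with hK
  -- a.e. the visit frequency tends to 0
  have htend : ∀ᵐ x ∂μ, Filter.Tendsto (fun N => ((K N x : ℝ))/N) atTop (𝓝 0) := by
    filter_upwards [ae_birkhoff_sublinear μ T hTs hErg hφm hφ hmean] with x hx
    rw [Metric.tendsto_atTop]
    intro δ' hδ'
    set δ : ℝ := ε * δ' / 8 with hδdef
    have hδ0 : 0 < δ := by positivity
    obtain ⟨N₀, hN₀⟩ := eventually_atTop.mp (hx δ hδ0)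
    set C : ℝ := ∑ k ∈ Finset.range N₀, |S k x| with hC
    have hC0 : 0 ≤ C := Finset.sum_nonneg (fun _ _ => abs_nonneg _)
    have hCb : ∀ n : ℕ, |S n x| ≤ C + δ * n := by
      intro n
      rcases lt_or_ge n N₀ with h | h
      · have h1 : |S n x| ≤ C :=
          Finset.single_le_sum (f := fun k => |S k x|) (fun _ _ => abs_nonneg _)
            (Finset.mem_range.mpr h)
        have h2 : (0:ℝ) ≤ δ * n := by positivity
        linarith
      · have := hN₀ n h
        linarith
    have hcard : ∀ N : ℕ, ((K N x : ℝ)) ≤ 2 * (C + δ * N) / ε + 2 := by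
      intro N
      refine card_sep hε (fun n => S n x) N _ (Finset.filter_subset _ _) ?_ (by positivity) ?_
      · intro k hk m hm hkm
        have hk' := (Finset.mem_filter.mp hk).2
        have hm' := (Finset.mem_filter.mp hm).2
        rcases lt_or_gt_of_ne hkm with h | h
        · rw [abs_sub_comm]; exact hsep' x k m h hk' hm'
        · exact hsep' x m k h hm' hk'
      · intro n hn
        refine (hCb n).trans ?_
        have h1 : (n:ℝ) ≤ N := by exact_mod_cast hn.le
        nlinarith
    obtain ⟨N₁, hN₁⟩ := exists_nat_gt ((2 * C / ε + 2) / (δ'/2))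
    refine ⟨max N₁ 1, fun N hN => ?_⟩
    have hN1 : 1 ≤ N := le_trans (le_max_right _ _) hN
    have hNN₁ : N₁ ≤ N := le_trans (le_max_left _ _) hN
    have hNpos : (0:ℝ) < N := by exact_mod_cast hN1
    have h2 : 2*C/ε + 2 ≤ (δ'/2) * N := by
      have hd2 : (0:ℝ) < δ'/2 := by positivity
      rw [div_lt_iff₀ hd2] at hN₁
      have : (N₁:ℝ) ≤ N := by exact_mod_cast hNN₁
      nlinarith
    have h4 : 2*δ/ε = δ'/4 := by
      rw [hδdef]; field_simp; ring
    have h5 : ((K N x : ℝ)) ≤ (3/4*δ') * N := by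
      have := hcard N
      have h3 : 2 * (C + δ*N) / ε + 2 = (2*C/ε + 2) + (2*δ/ε) * N := by ring
      rw [h3, h4] at this
      have : ((K N x:ℝ)) ≤ (δ'/2)*N + (δ'/4)*N := by linarith
      linarith
    rw [Real.dist_eq, sub_zero, abs_of_nonneg (by positivity)]
    rw [div_lt_iff₀ hNpos]
    nlinarith
  -- pass to ℝ≥0∞
  set g : ℕ → X → ℝ≥0∞ := fun N x => (K N x : ℝ≥0∞) / N with hg
  have hKsum : ∀ N x, (K N x : ℝ≥0∞)
      = ∑ n ∈ Finset.range N, Set.indicator ((⇑T)^[n] ⁻¹' E) (fun _ => (1:ℝ≥0∞)) x := by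
    intro N x
    rw [hK]
    simp only [Finset.card_filter]
    push_cast
    refine Finset.sum_congr rfl (fun n _ => ?_)
    by_cases h : (⇑T)^[n] x ∈ E <;>
      simp [Set.indicator_apply, Set.mem_preimage, h]
  have hgm : ∀ N, Measurable (g N) := by
    intro N
    have h1 : Measurable (fun x => (K N x : ℝ≥0∞)) := by
      have : (fun x => (K N x : ℝ≥0∞))
          = fun x => ∑ n ∈ Finset.range N, Set.indicator ((⇑T)^[n] ⁻¹' E) (fun _ => (1:ℝ≥0∞)) x :=
        funext (hKsum N)
      rw [this]
      exact Finset.measurable_sum _ (fun n _ => measurable_const.indicator ((hTm.iterate n) hEm))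
    exact h1.div measurable_const
  have hbound : ∀ N, g N ≤ᵐ[μ] (fun _ => (1:ℝ≥0∞)) := by
    intro N
    refine Filter.Eventually.of_forall (fun x => ?_)
    have h1 : K N x ≤ N := by
      rw [hK]
      simpa using Finset.card_filter_le (Finset.range N) _
    refine ENNReal.div_le_of_le_mul ?_
    rw [one_mul]
    exact_mod_cast h1
  have hint : ∀ N : ℕ, 1 ≤ N → ∫⁻ x, g N x ∂μ = μ E := by
    intro N hN
    have hKint : ∫⁻ x, (K N x : ℝ≥0∞) ∂μ = N * μ E := by
      rw [lintegral_congr (fun x => hKsum N x)]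
      rw [lintegral_finset_sum (f := fun n x => Set.indicator ((⇑T)^[n] ⁻¹' E) (fun _ => (1:ℝ≥0∞)) x)
        _ (fun n _ => measurable_const.indicator ((hTm.iterate n) hEm))]
      have : ∀ n ∈ Finset.range N,
          ∫⁻ x, Set.indicator ((⇑T)^[n] ⁻¹' E) (fun _ => (1:ℝ≥0∞)) x ∂μ = μ E := by
        intro n _
        rw [lintegral_indicator_const ((hTm.iterate n) hEm), one_mul]
        exact (hmp.iterate n).measure_preimage hEm.nullMeasurableSet
      rw [Finset.sum_congr rfl this, Finset.sum_const, Finset.card_range, nsmul_eq_mul]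
    have hNne : (N:ℝ≥0∞) ≠ 0 := by exact_mod_cast Nat.cast_ne_zero.mpr (by omega)
    have hNnetop : (N:ℝ≥0∞) ≠ ⊤ := ENNReal.natCast_ne_top N
    calc ∫⁻ x, g N x ∂μ = ∫⁻ x, (K N x : ℝ≥0∞) * ((N:ℝ≥0∞))⁻¹ ∂μ := by
          simp only [hg, div_eq_mul_inv]
      _ = (∫⁻ x, (K N x : ℝ≥0∞) ∂μ) * ((N:ℝ≥0∞))⁻¹ :=
          lintegral_mul_const' _ _ (by simpa using ENNReal.inv_ne_top.mpr hNne)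
      _ = (N * μ E) * ((N:ℝ≥0∞))⁻¹ := by rw [hKint]
      _ = μ E * ((N:ℝ≥0∞) * ((N:ℝ≥0∞))⁻¹) := by ring
      _ = μ E := by rw [ENNReal.mul_inv_cancel hNne hNnetop, mul_one]
  have hlimsup_int : Filter.limsup (fun N => ∫⁻ x, g N x ∂μ) atTop = μ E := by
    have hev : (fun N => ∫⁻ x, g N x ∂μ) =ᶠ[atTop] (fun _ => μ E) :=
      eventually_atTop.mpr ⟨1, hint⟩
    rw [Filter.limsup_congr hev, Filter.limsup_const]
  have hrev := limsup_lintegral_le (μ := μ) (f := g) (fun _ => (1:ℝ≥0∞)) hgm hbound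
    (by simp)
  have hae0 : ∀ᵐ x ∂μ, Filter.limsup (fun N => g N x) atTop = 0 := by
    filter_upwards [htend] with x hx
    have heq : (fun N => g N x) =ᶠ[atTop] (fun N => ENNReal.ofReal ((K N x : ℝ)/N)) := by
      refine eventually_atTop.mpr ⟨1, fun N hN => ?_⟩
      have hNpos : (0:ℝ) < (N:ℝ) := by exact_mod_cast hN
      show (K N x : ℝ≥0∞) / (N:ℝ≥0∞) = ENNReal.ofReal ((K N x : ℝ)/(N:ℝ))
      rw [ENNReal.ofReal_div_of_pos hNpos, ENNReal.ofReal_natCast, ENNReal.ofReal_natCast]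
    have htends : Filter.Tendsto (fun N => ENNReal.ofReal ((K N x : ℝ)/N)) atTop (𝓝 0) := by
      have := ENNReal.tendsto_ofReal hx
      simpa using this
    rw [Filter.limsup_congr heq]
    exact htends.limsup_eq
  have hfinal : μ E ≤ 0 := by
    have h1 : μ E ≤ ∫⁻ x, Filter.limsup (fun N => g N x) atTop ∂μ := by
      rw [← hlimsup_int]; exact hrev
    have h2 : ∫⁻ x, Filter.limsup (fun N => g N x) atTop ∂μ = 0 := by
      calc ∫⁻ x, Filter.limsup (fun N => g N x) atTop ∂μ
          = ∫⁻ _, (0:ℝ≥0∞) ∂μ := lintegral_congr_ae (by filter_upwards [hae0] with x hx; rw [hx])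
        _ = 0 := lintegral_zero
    rw [h2] at h1
    exact h1
  exact le_antisymm hfinal zero_le

end Main


end AuxAtkinson

/-- Atkinson's lemma. -/
theorem stmt4 {X : Type*} [MeasurableSpace X] (μ : Measure X)
    [IsProbabilityMeasure μ] (T : X ≃ X) (hTs : Measurable ⇑T.symm)
    (hErg : Ergodic ⇑T μ)
    (φ : X → ℝ) (hφ : Integrable φ μ) (hmean : ∫ x, φ x ∂μ = 0)
    (B : Set X) (hB : MeasurableSet B) (ε : ℝ) (hε : 0 < ε) :
    μ (⋃ n : ℕ, ⋃ _ : 1 ≤ n,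
        (B ∩ (⇑T)^[n] ⁻¹' B ∩ {x | |∑ i ∈ Finset.range n, φ ((⇑T)^[i] x)| < ε})) = μ B := by
  classical
  have hmp : MeasurePreserving ⇑T μ μ := hErg.toMeasurePreserving
  set φ' : X → ℝ := hφ.1.mk φ with hφ'def
  have hφ'm : Measurable φ' := hφ.1.stronglyMeasurable_mk.measurable
  have hae : φ =ᵐ[μ] φ' := hφ.1.ae_eq_mk
  have hφ'i : Integrable φ' μ := hφ.congr hae
  have hmean' : ∫ x, φ' x ∂μ = 0 := by rw [← integral_congr_ae hae]; exact hmean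
  set U : Set X := ⋃ n : ℕ, ⋃ _ : 1 ≤ n,
      (B ∩ (⇑T)^[n] ⁻¹' B ∩ {x | |∑ i ∈ Finset.range n, φ ((⇑T)^[i] x)| < ε}) with hU
  set U' : Set X := ⋃ n : ℕ, ⋃ _ : 1 ≤ n,
      (B ∩ (⇑T)^[n] ⁻¹' B ∩ {x | |birkhoffSum ⇑T φ' n x| < ε}) with hU'
  have haux : μ (B \ U') = 0 := atkinson_aux μ T hTs hErg hφ'm hφ'i hmean' B hB hε
  set D : Set X := {y | φ y ≠ φ' y} with hD
  have hD0 : μ D = 0 := hae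
  set G : Set X := ⋃ i : ℕ, (⇑T)^[i] ⁻¹' (toMeasurable μ D) with hG
  have hG0 : μ G = 0 := by
    refine measure_iUnion_null fun i => ?_
    rw [(hmp.iterate i).measure_preimage (measurableSet_toMeasurable μ D).nullMeasurableSet]
    rw [measure_toMeasurable]
    exact hD0
  have hsub : B \ U ⊆ (B \ U') ∪ G := by
    intro x hx
    by_cases hxG : x ∈ G
    · exact Or.inr hxG
    · left
      refine ⟨hx.1, fun hxU' => hx.2 ?_⟩
      have hphi : ∀ i : ℕ, φ ((⇑T)^[i] x) = φ' ((⇑T)^[i] x) := by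
        intro i
        by_contra hne
        exact hxG (Set.mem_iUnion.mpr ⟨i, subset_toMeasurable μ D hne⟩)
      have hsum : ∀ n : ℕ, (∑ i ∈ Finset.range n, φ ((⇑T)^[i] x)) = birkhoffSum ⇑T φ' n x :=
        fun n => Finset.sum_congr rfl (fun i _ => hphi i)
      obtain ⟨n, hmem⟩ := Set.mem_iUnion.mp hxU'
      obtain ⟨hn1, hmem⟩ := Set.mem_iUnion.mp hmem
      refine Set.mem_iUnion.mpr ⟨n, Set.mem_iUnion.mpr ⟨hn1, ⟨hmem.1, ?_⟩⟩⟩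
      have : |birkhoffSum ⇑T φ' n x| < ε := hmem.2
      rw [Set.mem_setOf_eq, hsum n]
      exact this
  have hBU0 : μ (B \ U) = 0 :=
    measure_mono_null hsub (measure_union_null haux hG0)
  have hUB : U ⊆ B := by
    intro x hx
    obtain ⟨n, hmem⟩ := Set.mem_iUnion.mp hx
    obtain ⟨_, hmem⟩ := Set.mem_iUnion.mp hmem
    exact hmem.1.1
  refine le_antisymm (measure_mono hUB) ?_
  calc μ B ≤ μ (U ∪ (B \ U)) := measure_mono (fun x hx => by
        by_cases h : x ∈ U
        · exact Or.inl h
        · exact Or.inr ⟨hx, h⟩)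
    _ ≤ μ U + μ (B \ U) := measure_union_le _ _
    _ = μ U := by rw [hBU0, add_zero]
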